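/- Let n ≥ 1, let P, A ∈ GL(2n, ℝ), and let W := {(P·u, P·A·u) : u ∈ ℝ^{2n}} ⊆ ℝ^{2n} × ℝ^{2n}. Assume Ω vanishes identically on W, i.e. Ω(w, w') = 0 for all w, w' ∈ W. Then the following are equivalent: (1) Ω₂ vanishes identically on W; (2) W is invariant under the complex structure 𝒥(u,a) := (a,−u), i.e. 𝒥(W) = W; (3) A² = −I_{2n}; (4) A is similar to J_{2n}, i.e. there exists S ∈ GL(2n, ℝ) with A = S·J_{2n}·S^{-1}. -/

import Mathlib

open Matrix

/-- The standard symplectic form on `ℝ^{2n}`, indexed by `Fin n ⊕ Fin n`. -/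
noncomputable def sform (n : ℕ) (u v : Fin n ⊕ Fin n → ℝ) : ℝ :=
  ∑ i : Fin n, (u (Sum.inl i) * v (Sum.inr i) - u (Sum.inr i) * v (Sum.inl i))

/-- The symplectic form `Ω` on `ℝ^{2n} × ℝ^{2n}`:  `Ω((u,a),(v,b)) = ω(u,b) + ω(a,v)`. -/
noncomputable def OmegaForm (n : ℕ)
    (w w' : (Fin n ⊕ Fin n → ℝ) × (Fin n ⊕ Fin n → ℝ)) : ℝ :=
  sform n w.1 w'.2 + sform n w.2 w'.1

/-- The form `Ω₂((u,a),(v,b)) = ω(u,v) − ω(a,b)` on `ℝ^{2n} × ℝ^{2n}`. -/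
noncomputable def Omega2Form (n : ℕ)
    (w w' : (Fin n ⊕ Fin n → ℝ) × (Fin n ⊕ Fin n → ℝ)) : ℝ :=
  sform n w.1 w'.1 - sform n w.2 w'.2

/-- The matrix `J_{2n} = [[0, I_n], [−I_n, 0]]`. -/
noncomputable def Jmat (n : ℕ) : Matrix (Fin n ⊕ Fin n) (Fin n ⊕ Fin n) ℝ :=
  Matrix.fromBlocks 0 1 (-1) 0

lemma sform_eq (n : ℕ) (u v : Fin n ⊕ Fin n → ℝ) :
    sform n u v = u ⬝ᵥ (Jmat n).mulVec v := by
  simp [sform, Jmat, dotProduct, mulVec, Fintype.sum_sum_type,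
    Finset.sum_sub_distrib, Matrix.one_apply, mul_ite, Finset.sum_ite_eq]
  ring

lemma Jmat_sq (n : ℕ) : Jmat n * Jmat n = -1 := by
  have h : (-1 : Matrix (Fin n ⊕ Fin n) (Fin n ⊕ Fin n) ℝ) =
      Matrix.fromBlocks (-1) 0 0 (-1) := by
    rw [← Matrix.fromBlocks_one, Matrix.fromBlocks_neg]
    simp
  rw [Jmat, Matrix.fromBlocks_multiply, h]
  simp

lemma dot_zero {n : Type*} [Fintype n] [DecidableEq n]
    (M : Matrix n n ℝ) (h : ∀ u v : n → ℝ, u ⬝ᵥ M.mulVec v = 0) : M = 0 := by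
  ext i j
  have := h (Pi.single i 1) (Pi.single j 1)
  simpa [Matrix.mulVec_single, dotProduct, Pi.single_apply, ite_mul] using this

lemma ext_mulVec {n : Type*} [Fintype n] [DecidableEq n]
    (M N : Matrix n n ℝ) (h : ∀ v : n → ℝ, M.mulVec v = N.mulVec v) : M = N := by
  ext i j
  have := congrFun (h (Pi.single j 1)) i
  simpa [Matrix.mulVec_single] using this

lemma sform_mulVec (n : ℕ) (X Y : Matrix (Fin n ⊕ Fin n) (Fin n ⊕ Fin n) ℝ)
    (u v : Fin n ⊕ Fin n → ℝ) :
    sform n (X.mulVec u) (Y.mulVec v) = u ⬝ᵥ ((Xᵀ * Jmat n * Y).mulVec v) := by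
  rw [sform_eq, Matrix.mulVec_mulVec, Matrix.dotProduct_mulVec, ← Matrix.vecMul_transpose,
    Matrix.vecMul_vecMul, ← Matrix.dotProduct_mulVec, Matrix.mul_assoc]

lemma similar_of_sq (n : ℕ) (A : Matrix (Fin n ⊕ Fin n) (Fin n ⊕ Fin n) ℝ)
    (h : A * A = -1) :
    ∃ S : Matrix (Fin n ⊕ Fin n) (Fin n ⊕ Fin n) ℝ,
      IsUnit S.det ∧ A = S * Jmat n * S⁻¹ := by
  classical
  have hAA : ∀ v : Fin n ⊕ Fin n → ℝ, A.mulVec (A.mulVec v) = -v := by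
    intro v
    rw [Matrix.mulVec_mulVec, h, Matrix.neg_mulVec, Matrix.one_mulVec]
  letI smulC : SMul ℂ (Fin n ⊕ Fin n → ℝ) := ⟨fun z v => z.re • v + z.im • A.mulVec v⟩
  have smul_def : ∀ (z : ℂ) (v : Fin n ⊕ Fin n → ℝ),
      z • v = z.re • v + z.im • A.mulVec v := fun _ _ => rfl
  letI modC : Module ℂ (Fin n ⊕ Fin n → ℝ) :=
    { smul := smulC.smul
      one_smul := by intro v; simp [smul_def]
      mul_smul := by
        intro z w v
        simp only [smul_def, Complex.mul_re, Complex.mul_im, Matrix.mulVec_add,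
          Matrix.mulVec_smul, smul_add, smul_smul, hAA]
        ext x
        simp [Pi.add_apply, Pi.smul_apply, smul_eq_mul]
        ring
      smul_zero := by intro z; simp [smul_def, Matrix.mulVec_zero]
      smul_add := by
        intro z u v
        simp only [smul_def, Matrix.mulVec_add, smul_add]
        abel
      add_smul := by
        intro z w v
        simp only [smul_def, Complex.add_re, Complex.add_im, add_smul]
        abel
      zero_smul := by intro v; simp [smul_def] }
  letI : IsScalarTower ℝ ℂ (Fin n ⊕ Fin n → ℝ) := by
    constructor
    intro r z v
    simp only [smul_def, Complex.real_smul, Complex.mul_re, Complex.mul_im,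
      Complex.ofReal_re, Complex.ofReal_im, smul_add, smul_smul]
    simp
  letI : Module.Finite ℂ (Fin n ⊕ Fin n → ℝ) := Module.Finite.right ℝ ℂ _
  have hrank : Module.finrank ℂ (Fin n ⊕ Fin n → ℝ) = n := by
    have h1 : Module.finrank ℝ ℂ * Module.finrank ℂ (Fin n ⊕ Fin n → ℝ)
        = Module.finrank ℝ (Fin n ⊕ Fin n → ℝ) := Module.finrank_mul_finrank ℝ ℂ _
    rw [Complex.finrank_real_complex, Module.finrank_pi] at h1
    simp [Fintype.card_sum] at h1
    omega
  let b : Module.Basis (Fin n) ℂ (Fin n ⊕ Fin n → ℝ) := Module.finBasisOfFinrankEq ℂ _ hrank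
  let e : Fin 2 × Fin n ≃ Fin n ⊕ Fin n :=
    { toFun := fun p => if p.1 = 0 then Sum.inr p.2 else Sum.inl p.2
      invFun := Sum.elim (fun i => (1, i)) (fun i => (0, i))
      left_inv := by rintro ⟨k, j⟩; fin_cases k <;> simp
      right_inv := by rintro (i | i) <;> simp }
  let B : Module.Basis (Fin n ⊕ Fin n) ℝ (Fin n ⊕ Fin n → ℝ) :=
    (Complex.basisOneI.smulTower b).reindex e
  have hBl : ∀ j, B (Sum.inl j) = A.mulVec (b j) := by
    intro j
    have he : e.symm (Sum.inl j) = (1, j) := rfl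
    rw [Module.Basis.reindex_apply, he, Module.Basis.smulTower_apply]
    simp [Complex.coe_basisOneI, smul_def]
  have hBr : ∀ j, B (Sum.inr j) = b j := by
    intro j
    have he : e.symm (Sum.inr j) = (0, j) := rfl
    rw [Module.Basis.reindex_apply, he, Module.Basis.smulTower_apply]
    simp [Complex.coe_basisOneI]
  let S := (Pi.basisFun ℝ (Fin n ⊕ Fin n)).toMatrix B
  have hS : ∀ i j, S i j = B j i := by
    intro i j
    simp [S, Module.Basis.toMatrix_apply]
  haveI := (Pi.basisFun ℝ (Fin n ⊕ Fin n)).invertibleToMatrix B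
  have hSdet : IsUnit S.det := Matrix.isUnit_det_of_invertible S
  have hAS : A * S = S * Jmat n := by
    ext i k
    rw [Matrix.mul_apply, Matrix.mul_apply]
    cases k with
    | inl j =>
      calc ∑ m, A i m * S m (Sum.inl j) = A.mulVec (A.mulVec (b j)) i := by
            simp only [hS, hBl]; rfl
        _ = -(b j) i := by rw [hAA]; rfl
        _ = ∑ m, S i m * Jmat n m (Sum.inl j) := by
            simp [Jmat, Fintype.sum_sum_type, hS, hBr, Matrix.one_apply, mul_ite,
              Finset.sum_ite_eq]
    | inr j =>
      calc ∑ m, A i m * S m (Sum.inr j) = A.mulVec (b j) i := by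
            simp only [hS, hBr]; rfl
        _ = ∑ m, S i m * Jmat n m (Sum.inr j) := by
            simp [Jmat, Fintype.sum_sum_type, hS, hBl, Matrix.one_apply, mul_ite,
              Finset.sum_ite_eq]
  refine ⟨S, hSdet, ?_⟩
  rw [← hAS, Matrix.mul_assoc, Matrix.mul_nonsing_inv _ hSdet, Matrix.mul_one]

lemma alg1 {m : Type*} [Fintype m] [DecidableEq m] (M A : Matrix m m ℝ)
    (e1 : Aᵀ * M = -(M * A)) (h3 : A * A = -1) : M - Aᵀ * (M * A) = 0 := by
  rw [← Matrix.mul_assoc, e1, Matrix.neg_mul, sub_neg_eq_add, Matrix.mul_assoc, h3,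
    Matrix.mul_neg, Matrix.mul_one, add_neg_cancel]

lemma alg2 {m : Type*} [Fintype m] [DecidableEq m] (M A : Matrix m m ℝ)
    (hMdet : IsUnit M.det) (e1 : Aᵀ * M = -(M * A)) (h1m : M - Aᵀ * (M * A) = 0) :
    A * A = -1 := by
  have hM1 : M = Aᵀ * (M * A) := by rwa [sub_eq_zero] at h1m
  have e2 : M * A = -(Aᵀ * M) := by rw [e1, neg_neg]
  have hMAA : M * (A * A) = -M := by
    calc M * (A * A) = (M * A) * A := (Matrix.mul_assoc M A A).symm
      _ = (-(Aᵀ * M)) * A := by rw [e2]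
      _ = -((Aᵀ * M) * A) := by rw [Matrix.neg_mul]
      _ = -(Aᵀ * (M * A)) := by rw [Matrix.mul_assoc]
      _ = -M := by rw [← hM1]
  calc A * A = 1 * (A * A) := (one_mul _).symm
    _ = (M⁻¹ * M) * (A * A) := by rw [Matrix.nonsing_inv_mul _ hMdet]
    _ = M⁻¹ * (M * (A * A)) := by rw [Matrix.mul_assoc]
    _ = M⁻¹ * (-M) := by rw [hMAA]
    _ = -(M⁻¹ * M) := by rw [Matrix.mul_neg]
    _ = -1 := by rw [Matrix.nonsing_inv_mul _ hMdet]

lemma alg3 {m : Type*} [Fintype m] [DecidableEq m] (S J : Matrix m m ℝ)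
    (hS : IsUnit S.det) (hJ : J * J = -1) : (S * J * S⁻¹) * (S * J * S⁻¹) = -1 := by
  calc (S * J * S⁻¹) * (S * J * S⁻¹)
      = S * J * (S⁻¹ * S) * J * S⁻¹ := by simp only [Matrix.mul_assoc]
    _ = S * (J * J) * S⁻¹ := by
        rw [Matrix.nonsing_inv_mul _ hS]
        simp only [Matrix.mul_one, Matrix.mul_assoc]
    _ = -1 := by
        rw [hJ, Matrix.mul_neg, Matrix.mul_one, Matrix.neg_mul,
          Matrix.mul_nonsing_inv _ hS]

theorem stmt14 (n : ℕ) (hn : 1 ≤ n)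
    (P A : Matrix (Fin n ⊕ Fin n) (Fin n ⊕ Fin n) ℝ)
    (hP : IsUnit P.det) (hA : IsUnit A.det)
    (W : Set ((Fin n ⊕ Fin n → ℝ) × (Fin n ⊕ Fin n → ℝ)))
    (hW : W = {w | ∃ u : Fin n ⊕ Fin n → ℝ, w = (P.mulVec u, P.mulVec (A.mulVec u))})
    (hΩ : ∀ w ∈ W, ∀ w' ∈ W, OmegaForm n w w' = 0) :
    List.TFAE
      [ ∀ w ∈ W, ∀ w' ∈ W, Omega2Form n w w' = 0,
        (fun w : (Fin n ⊕ Fin n → ℝ) × (Fin n ⊕ Fin n → ℝ) => (w.2, -w.1)) '' W = W,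
        A * A = -1,
        ∃ S : Matrix (Fin n ⊕ Fin n) (Fin n ⊕ Fin n) ℝ,
          IsUnit S.det ∧ A = S * Jmat n * S⁻¹ ] := by
  subst hW
  -- matrix `M = Pᵀ J P`
  set M : Matrix (Fin n ⊕ Fin n) (Fin n ⊕ Fin n) ℝ := Pᵀ * Jmat n * P with hMdef
  have hJdet : IsUnit (Jmat n).det := by
    have hJJ : Jmat n * (-(Jmat n)) = 1 := by
      rw [Matrix.mul_neg, Jmat_sq]; simp
    exact IsUnit.of_mul_eq_one _ (by rw [← Matrix.det_mul, hJJ, Matrix.det_one])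
  have hMdet : IsUnit M.det := by
    rw [hMdef, Matrix.det_mul, Matrix.det_mul, Matrix.det_transpose]
    exact (hP.mul hJdet).mul hP
  have hPinj : ∀ x y : Fin n ⊕ Fin n → ℝ, P.mulVec x = P.mulVec y → x = y := by
    intro x y hxy
    have := congrArg (fun z => (P⁻¹).mulVec z) hxy
    simpa [Matrix.mulVec_mulVec, Matrix.nonsing_inv_mul P hP, Matrix.one_mulVec] using this
  have comp0 : ∀ u v : Fin n ⊕ Fin n → ℝ,
      OmegaForm n (P.mulVec u, P.mulVec (A.mulVec u)) (P.mulVec v, P.mulVec (A.mulVec v))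
        = u ⬝ᵥ ((M * A + Aᵀ * M).mulVec v) := by
    intro u v
    rw [hMdef]
    simp only [OmegaForm, Matrix.mulVec_mulVec, sform_mulVec, Matrix.transpose_mul,
      Matrix.add_mulVec, dotProduct_add, Matrix.mul_assoc]
  have comp2 : ∀ u v : Fin n ⊕ Fin n → ℝ,
      Omega2Form n (P.mulVec u, P.mulVec (A.mulVec u)) (P.mulVec v, P.mulVec (A.mulVec v))
        = u ⬝ᵥ ((M - Aᵀ * (M * A)).mulVec v) := by
    intro u v
    rw [hMdef]
    simp only [Omega2Form, Matrix.mulVec_mulVec, sform_mulVec, Matrix.transpose_mul,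
      Matrix.sub_mulVec, dotProduct_sub, Matrix.mul_assoc]
  have hM : M * A + Aᵀ * M = 0 := by
    apply dot_zero
    intro u v
    rw [← comp0]
    exact hΩ _ ⟨u, rfl⟩ _ ⟨v, rfl⟩
  have e1 : Aᵀ * M = -(M * A) := eq_neg_of_add_eq_zero_right hM
  tfae_have 3 → 1 := by
    intro h3 w hw w' hw'
    obtain ⟨u, rfl⟩ := hw
    obtain ⟨v, rfl⟩ := hw'
    rw [comp2]
    have hz : M - Aᵀ * (M * A) = 0 := alg1 M A e1 h3
    rw [hz, Matrix.zero_mulVec, dotProduct_zero]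
  tfae_have 1 → 3 := by
    intro h1
    have h1m : M - Aᵀ * (M * A) = 0 := by
      apply dot_zero
      intro u v
      rw [← comp2]
      exact h1 _ ⟨u, rfl⟩ _ ⟨v, rfl⟩
    exact alg2 M A hMdet e1 h1m
  tfae_have 3 → 2 := by
    intro h3
    have hAA : ∀ u : Fin n ⊕ Fin n → ℝ, A.mulVec (A.mulVec u) = -u := by
      intro u
      rw [Matrix.mulVec_mulVec, h3, Matrix.neg_mulVec, Matrix.one_mulVec]
    apply Set.Subset.antisymm
    · rintro _ ⟨w, ⟨u, rfl⟩, rfl⟩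
      have hc : P.mulVec (A.mulVec (A.mulVec u)) = -(P.mulVec u) := by
        rw [hAA, Matrix.mulVec_neg]
      exact ⟨A.mulVec u, by rw [hc]⟩
    · rintro w ⟨u, rfl⟩
      refine ⟨(P.mulVec (-(A.mulVec u)), P.mulVec (A.mulVec (-(A.mulVec u)))),
        ⟨-(A.mulVec u), rfl⟩, ?_⟩
      simp only [Prod.mk.injEq]
      constructor
      · rw [Matrix.mulVec_neg, hAA]
        simp
      · rw [Matrix.mulVec_neg]
        simp
  tfae_have 2 → 3 := by
    intro h2
    apply ext_mulVec
    intro u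
    have hmem : (P.mulVec (A.mulVec u), -(P.mulVec u)) ∈
        (fun w : (Fin n ⊕ Fin n → ℝ) × (Fin n ⊕ Fin n → ℝ) => (w.2, -w.1)) ''
          {w | ∃ u, w = (P.mulVec u, P.mulVec (A.mulVec u))} :=
      ⟨(P.mulVec u, P.mulVec (A.mulVec u)), ⟨u, rfl⟩, rfl⟩
    rw [h2] at hmem
    obtain ⟨v, hv⟩ := hmem
    have hv1 : P.mulVec (A.mulVec u) = P.mulVec v := congrArg Prod.fst hv
    have hv2 : -(P.mulVec u) = P.mulVec (A.mulVec v) := congrArg Prod.snd hv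
    have hveq : A.mulVec u = v := hPinj _ _ hv1
    subst hveq
    rw [← Matrix.mulVec_neg] at hv2
    have := hPinj _ _ hv2
    rw [Matrix.mulVec_mulVec] at this
    rw [← this, Matrix.neg_mulVec, Matrix.one_mulVec]
  tfae_have 3 → 4 := fun h3 => similar_of_sq n A h3
  tfae_have 4 → 3 := by
    rintro ⟨S, hS, rfl⟩
    exact alg3 S (Jmat n) hS (Jmat_sq n)
  tfae_finish
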